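/- Let W_f, W_r ∈ ℝ^{n×m}, U_f, U_r ∈ ℝ^{n×n}, L_f ∈ ℝ^{n×p}, U_o ∈ ℝ^{p×n}, b_f, b_r ∈ ℝ^n, and x̌ ≥ 0. Define σ̌_f = σ(max_i (∑_j |(W_f)_{ij}| + x̌·∑_j |(U_f)_{ij}| + |(b_f)_i|)). For u ∈ ℝ^m with ‖u‖_∞ ≤ 1 and x, x̂ ∈ ℝ^n with ‖x‖_∞ ≤ x̌ and ‖x̂‖_∞ ≤ x̌, set f = σ(W_f u + U_f x + b_f), f̂ = σ(W_f u + U_f x̂ + b_f + L_f U_o (x − x̂)), r = tanh(W_r u + U_r (f ∘ x) + b_r), r̂ = tanh(W_r u + U_r (f̂ ∘ x̂) + b_r). Then ‖r − r̂‖_∞ ≤ ‖U_r‖_∞·((1/4)·x̌·‖U_f − L_f·U_o‖_∞ + σ̌_f)·‖x − x̂‖_∞. -/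

import Mathlib

open Matrix

/-- The logistic sigmoid. -/
noncomputable def sigmoid (s : ℝ) : ℝ := 1 / (1 + Real.exp (-s))

/-- ∞-norm on `Fin n → ℝ`. -/
noncomputable def normInf {n : ℕ} (v : Fin n → ℝ) : ℝ := ⨆ i, |v i|

/-- Induced ∞-norm of a matrix (maximum absolute row sum). -/
noncomputable def matNormInf {n m : ℕ} (A : Matrix (Fin n) (Fin m) ℝ) : ℝ :=
  ⨆ i, ∑ j, |A i j|

section Helpers
open NNReal

lemma sigmoid_hasDerivAt (s : ℝ) :
    HasDerivAt sigmoid (Real.exp (-s) / (1 + Real.exp (-s)) ^ 2) s := by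
  have he : (0:ℝ) < Real.exp (-s) := Real.exp_pos _
  have h1 : HasDerivAt (fun t : ℝ => 1 + Real.exp (-t)) (-Real.exp (-s)) s := by
    have h := (Real.hasDerivAt_exp (-s)).comp s ((hasDerivAt_id s).neg)
    simpa using h.const_add 1
  have h2 := (hasDerivAt_const s (1:ℝ)).div h1 (by positivity)
  exact h2.congr_deriv (by ring)

lemma sigmoid_lip (a b : ℝ) : |sigmoid a - sigmoid b| ≤ (1/4) * |a - b| := by
  have hl : LipschitzWith (1/4) sigmoid := by
    apply lipschitzWith_of_nnnorm_deriv_le (fun x => (sigmoid_hasDerivAt x).differentiableAt)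
    intro x
    rw [(sigmoid_hasDerivAt x).deriv, ← NNReal.coe_le_coe, coe_nnnorm, Real.norm_eq_abs]
    have he : (0:ℝ) < Real.exp (-x) := Real.exp_pos _
    have hpos : (0:ℝ) < Real.exp (-x) / (1 + Real.exp (-x)) ^ 2 := by positivity
    rw [abs_of_pos hpos]
    have hq : ((1/4 : ℝ≥0) : ℝ) = 1/4 := by norm_num
    rw [hq]
    have hsq : (0:ℝ) < (1 + Real.exp (-x)) ^ 2 := by positivity
    rw [div_le_iff₀ hsq]
    nlinarith [sq_nonneg (1 - Real.exp (-x))]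
  have := hl.dist_le_mul a b
  simpa [Real.dist_eq] using this

lemma tanh_lip (a b : ℝ) : |Real.tanh a - Real.tanh b| ≤ |a - b| := by
  have hd : ∀ x : ℝ, HasDerivAt Real.tanh
      ((Real.cosh x * Real.cosh x - Real.sinh x * Real.sinh x) / Real.cosh x ^ 2) x := by
    intro x
    have h := (Real.hasDerivAt_sinh x).div (Real.hasDerivAt_cosh x) (ne_of_gt (Real.cosh_pos x))
    have e : Real.tanh = Real.sinh / Real.cosh :=
      funext fun y => by rw [Pi.div_apply, Real.tanh_eq_sinh_div_cosh]
    rw [e]; exact h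
  have hl : LipschitzWith 1 Real.tanh := by
    apply lipschitzWith_of_nnnorm_deriv_le (fun x => (hd x).differentiableAt)
    intro x
    rw [(hd x).deriv, ← NNReal.coe_le_coe, coe_nnnorm, Real.norm_eq_abs]
    have hc := Real.cosh_pos x
    have h1 := Real.one_le_cosh x
    have hs : Real.cosh x * Real.cosh x - Real.sinh x * Real.sinh x = 1 := by
      have := Real.cosh_sq x
      nlinarith
    rw [hs]
    have hpos : (0:ℝ) < 1 / Real.cosh x ^ 2 := by positivity
    rw [abs_of_pos hpos]
    push_cast
    rw [div_le_one (by positivity)]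
    nlinarith
  have := hl.dist_le_mul a b
  simpa [Real.dist_eq] using this

lemma sigmoid_pos (s : ℝ) : 0 < sigmoid s := by
  unfold sigmoid; positivity

lemma sigmoid_mono {a b : ℝ} (h : a ≤ b) : sigmoid a ≤ sigmoid b := by
  unfold sigmoid
  have : Real.exp (-b) ≤ Real.exp (-a) := Real.exp_le_exp.2 (by linarith)
  have h2 : (0:ℝ) < 1 + Real.exp (-b) := by positivity
  apply one_div_le_one_div_of_le h2 (by linarith)

lemma abs_le_normInf {n : ℕ} (v : Fin n → ℝ) (i : Fin n) : |v i| ≤ normInf v := by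
  unfold normInf
  exact le_ciSup (Set.Finite.bddAbove (Set.finite_range fun k => |v k|)) i

lemma normInf_nonneg {n : ℕ} (v : Fin n → ℝ) (i : Fin n) : 0 ≤ normInf v :=
  (abs_nonneg _).trans (abs_le_normInf v i)

lemma rowsum_le_matNormInf {n m : ℕ} (A : Matrix (Fin n) (Fin m) ℝ) (i : Fin n) :
    ∑ j, |A i j| ≤ matNormInf A := by
  unfold matNormInf
  exact le_ciSup (Set.Finite.bddAbove (Set.finite_range fun k => ∑ j, |A k j|)) i

lemma mulVec_entry_bound {n m : ℕ} (A : Matrix (Fin n) (Fin m) ℝ) (v : Fin m → ℝ) (c : ℝ)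
    (hc : ∀ j, |v j| ≤ c) (i : Fin n) : |A.mulVec v i| ≤ (∑ j, |A i j|) * c := by
  rw [Matrix.mulVec, dotProduct]
  calc |∑ j, A i j * v j| ≤ ∑ j, |A i j * v j| := Finset.abs_sum_le_sum_abs _ _
    _ ≤ ∑ j, |A i j| * c := by
        apply Finset.sum_le_sum
        intro j _
        rw [abs_mul]
        exact mul_le_mul_of_nonneg_left (hc j) (abs_nonneg _)
    _ = (∑ j, |A i j|) * c := by rw [Finset.sum_mul]

end Helpers

/-- squashed-input difference bound between a GRU and its
Luenberger-like observer. -/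

theorem stmt_11 {n m p : ℕ}
    (Wf Wr : Matrix (Fin n) (Fin m) ℝ) (Uf Ur : Matrix (Fin n) (Fin n) ℝ)
    (Lf : Matrix (Fin n) (Fin p) ℝ) (Uo : Matrix (Fin p) (Fin n) ℝ)
    (bf br : Fin n → ℝ) (xcheck : ℝ) (hx : 0 ≤ xcheck)
    (u : Fin m → ℝ) (hu : normInf u ≤ 1)
    (x xhat : Fin n → ℝ) (hxb : normInf x ≤ xcheck) (hxhatb : normInf xhat ≤ xcheck) :
    let sigf : ℝ := sigmoid (⨆ i, (∑ jj, |Wf i jj| + xcheck * ∑ jj, |Uf i jj| + |bf i|))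
    let f : Fin n → ℝ := fun j => sigmoid ((Wf.mulVec u + Uf.mulVec x + bf) j)
    let fhat : Fin n → ℝ := fun j =>
      sigmoid ((Wf.mulVec u + Uf.mulVec xhat + bf + Lf.mulVec (Uo.mulVec (x - xhat))) j)
    let r : Fin n → ℝ := fun j =>
      Real.tanh ((Wr.mulVec u + Ur.mulVec (fun i => f i * x i) + br) j)
    let rhat : Fin n → ℝ := fun j =>
      Real.tanh ((Wr.mulVec u + Ur.mulVec (fun i => fhat i * xhat i) + br) j)
    normInf (r - rhat) ≤
      matNormInf Ur * ((1 / 4) * xcheck * matNormInf (Uf - Lf * Uo) + sigf) *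
        normInf (x - xhat) := by
  intro sigf f fhat r rhat
  rcases Nat.eq_zero_or_pos n with hn | hn
  · subst hn
    have h1 : normInf (r - rhat) = 0 := Real.iSup_of_isEmpty _
    have h2 : normInf (x - xhat) = 0 := Real.iSup_of_isEmpty _
    rw [h1, h2, mul_zero]
  · have i0 : Fin n := ⟨0, hn⟩
    haveI : Nonempty (Fin n) := ⟨i0⟩
    have hd0 : 0 ≤ normInf (x - xhat) := normInf_nonneg _ i0
    set d := normInf (x - xhat) with hd
    set M := matNormInf (Uf - Lf * Uo) with hM
    have hM0 : 0 ≤ M :=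
      le_trans (Finset.sum_nonneg fun j _ => abs_nonneg _) (rowsum_le_matNormInf _ i0)
    have hdx : ∀ i, |x i - xhat i| ≤ d := by
      intro i
      have := abs_le_normInf (x - xhat) i
      simpa using this
    -- bound on f
    have hfb : ∀ i, |f i| ≤ sigf := by
      intro i
      have h1 : |Wf.mulVec u i| ≤ (∑ jj, |Wf i jj|) * 1 :=
        mulVec_entry_bound Wf u 1 (fun j => (abs_le_normInf u j).trans hu) i
      have h2 : |Uf.mulVec x i| ≤ (∑ jj, |Uf i jj|) * xcheck :=
        mulVec_entry_bound Uf x xcheck (fun j => (abs_le_normInf x j).trans hxb) i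
      have h1' := (le_abs_self _).trans h1
      have h2' := (le_abs_self _).trans h2
      have h3 := le_abs_self (bf i)
      have harg : (Wf.mulVec u + Uf.mulVec x + bf) i ≤
          ∑ jj, |Wf i jj| + xcheck * ∑ jj, |Uf i jj| + |bf i| := by
        simp only [Pi.add_apply]
        rw [mul_comm xcheck]
        linarith
      have hsup : (∑ jj, |Wf i jj| + xcheck * ∑ jj, |Uf i jj| + |bf i|) ≤
          ⨆ k, (∑ jj, |Wf k jj| + xcheck * ∑ jj, |Uf k jj| + |bf k|) :=
        le_ciSup (Set.Finite.bddAbove (Set.finite_range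
          fun k => ∑ jj, |Wf k jj| + xcheck * ∑ jj, |Uf k jj| + |bf k|)) i
      rw [abs_of_pos (sigmoid_pos _)]
      exact sigmoid_mono (harg.trans hsup)
    -- bound on f - fhat
    have hffhat : ∀ i, |f i - fhat i| ≤ (1/4) * (M * d) := by
      intro i
      have key : (Wf.mulVec u + Uf.mulVec x + bf) i -
          (Wf.mulVec u + Uf.mulVec xhat + bf + Lf.mulVec (Uo.mulVec (x - xhat))) i
          = (Uf - Lf * Uo).mulVec (x - xhat) i := by
        simp only [Pi.add_apply, Matrix.sub_mulVec, Matrix.mulVec_sub, Pi.sub_apply,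
          ← Matrix.mulVec_mulVec]
        ring
      calc |f i - fhat i| ≤ (1/4) * |(Wf.mulVec u + Uf.mulVec x + bf) i -
            (Wf.mulVec u + Uf.mulVec xhat + bf + Lf.mulVec (Uo.mulVec (x - xhat))) i| :=
            sigmoid_lip _ _
        _ = (1/4) * |(Uf - Lf * Uo).mulVec (x - xhat) i| := by rw [key]
        _ ≤ (1/4) * ((∑ j, |(Uf - Lf * Uo) i j|) * d) := by
            apply mul_le_mul_of_nonneg_left _ (by norm_num)
            exact mulVec_entry_bound _ _ _ (fun j => by simpa using hdx j) i
        _ ≤ (1/4) * (M * d) := by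
            apply mul_le_mul_of_nonneg_left _ (by norm_num)
            exact mul_le_mul_of_nonneg_right (rowsum_le_matNormInf _ i) hd0
    set K := (1/4) * xcheck * M + sigf with hK
    have hprod : ∀ i, |f i * x i - fhat i * xhat i| ≤ K * d := by
      intro i
      have e1 : f i * x i - fhat i * xhat i
          = (f i - fhat i) * xhat i + f i * (x i - xhat i) := by ring
      rw [e1]
      have hxh : |xhat i| ≤ xcheck := (abs_le_normInf xhat i).trans hxhatb
      calc |(f i - fhat i) * xhat i + f i * (x i - xhat i)|
          ≤ |f i - fhat i| * |xhat i| + |f i| * |x i - xhat i| := by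
            refine (abs_add_le _ _).trans ?_
            rw [abs_mul, abs_mul]
        _ ≤ ((1/4) * (M * d)) * xcheck + sigf * d := by
            apply add_le_add
            · exact mul_le_mul (hffhat i) hxh (abs_nonneg _)
                (mul_nonneg (by norm_num) (mul_nonneg hM0 hd0))
            · exact mul_le_mul (hfb i) (hdx i) (abs_nonneg _)
                (le_trans (abs_nonneg _) (hfb i))
        _ = K * d := by rw [hK]; ring
    have hKd0 : 0 ≤ K * d := le_trans (abs_nonneg _) (hprod i0)
    have hr : ∀ j, |(r - rhat) j| ≤ matNormInf Ur * (K * d) := by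
      intro j
      have e2 : (r - rhat) j = r j - rhat j := rfl
      rw [e2]
      have key2 : (Wr.mulVec u + Ur.mulVec (fun i => f i * x i) + br) j -
          (Wr.mulVec u + Ur.mulVec (fun i => fhat i * xhat i) + br) j
          = Ur.mulVec (fun i => f i * x i - fhat i * xhat i) j := by
        have : (fun i => f i * x i - fhat i * xhat i)
            = (fun i => f i * x i) - (fun i => fhat i * xhat i) := rfl
        simp only [this, Matrix.mulVec_sub, Pi.add_apply, Pi.sub_apply]
        ring
      calc |r j - rhat j| ≤ |(Wr.mulVec u + Ur.mulVec (fun i => f i * x i) + br) j -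
            (Wr.mulVec u + Ur.mulVec (fun i => fhat i * xhat i) + br) j| := tanh_lip _ _
        _ = |Ur.mulVec (fun i => f i * x i - fhat i * xhat i) j| := by rw [key2]
        _ ≤ (∑ i, |Ur j i|) * (K * d) := mulVec_entry_bound _ _ _ hprod j
        _ ≤ matNormInf Ur * (K * d) :=
            mul_le_mul_of_nonneg_right (rowsum_le_matNormInf _ j) hKd0
    have : normInf (r - rhat) ≤ matNormInf Ur * (K * d) := by
      unfold normInf
      exact ciSup_le hr
    calc normInf (r - rhat) ≤ matNormInf Ur * (K * d) := this
      _ = matNormInf Ur * K * d := by ring
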